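/- Suppose n ≥ 3 and 2 ≤ d_1 ≤ d_2 ≤ … ≤ d_n are integers with 2·d_n ≤ ∏_{i<n} d_i and Δ(d_1, …, d_n) > 0. Then exactly one of the following holds: (d_1, …, d_n) = (3,3,3) (in which case Δ = 2), (d_1, …, d_n) = (2,2,2,2) (in which case Δ = 3), or Δ(d_1, …, d_n) > 3. -/

import Mathlib

open scoped ComplexConjugate

noncomputable section

def rhoK {n : ℕ} (d : Fin n → ℕ) (ψ : (∀ i, Fin (d i)) → ℂ) (k : Fin n) :
    Matrix (Fin (d k)) (Fin (d k)) ℂ :=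
  Matrix.of fun j l =>
    ∑ x : ∀ i, Fin (d i), if x k = j then ψ x * conj (ψ (Function.update x k l)) else 0

def Normalized {n : ℕ} {d : Fin n → ℕ} (ψ : (∀ i, Fin (d i)) → ℂ) : Prop :=
  ∑ x, ‖ψ x‖ ^ 2 = 1

def IsLME {n : ℕ} (d : Fin n → ℕ) (ψ : (∀ i, Fin (d i)) → ℂ) : Prop :=
  Normalized ψ ∧ ∀ k, rhoK d ψ k = (1 / (d k : ℂ)) • 1

def LMEExists (n : ℕ) (d : Fin n → ℕ) : Prop := ∃ ψ, IsLME d ψ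

def Nfun {n : ℕ} (k : Fin n → ℕ) : ℤ :=
  ∑ S ∈ Finset.univ.powerset.filter (fun S : Finset (Fin n) => S.Nonempty),
    (-1 : ℤ) ^ (S.card + 1) * ((Finset.gcd S k : ℕ) : ℤ)

def Rfun {n : ℕ} (d : Fin n → ℕ) : ℤ :=
  (∏ i, (d i : ℤ)) - Nfun (fun i => (d i) ^ 2)

def Dfun {n : ℕ} (d : Fin n → ℕ) : ℤ :=
  (∏ i, (d i : ℤ)) - 1 - ∑ i, ((d i : ℤ) ^ 2 - 1)

set_option maxHeartbeats 1000000


lemma case3 (d : Fin 3 → ℕ) (hd : ∀ i, 2 ≤ d i) (hmono : Monotone d)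
    (hbound : 2 * d (Fin.last 2) ≤ ∏ i : Fin 2, d (Fin.castSucc i)) (hΔ : 0 < Dfun d) :
    ((∀ i, d i = 3) ∧ Dfun d = 2) ∨ 3 < Dfun d := by
  have hE : Dfun d = (d 0 : ℤ) * d 1 * d 2 + 2 - (d 0:ℤ)^2 - (d 1:ℤ)^2 - (d 2:ℤ)^2 := by
    simp [Dfun, Fin.prod_univ_three, Fin.sum_univ_three]; ring
  have hb : 2 * d 2 ≤ d 0 * d 1 := by simpa [Fin.prod_univ_two] using hbound
  have h01 : d 0 ≤ d 1 := hmono (by decide)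
  have h12 : d 1 ≤ d 2 := hmono (by decide)
  have h2 : 2 ≤ d 0 := hd 0
  have hAB : (d 0 : ℤ) ≤ d 1 := by exact_mod_cast h01
  have hBC : (d 1 : ℤ) ≤ d 2 := by exact_mod_cast h12
  have hbZ : 2 * (d 2 : ℤ) ≤ (d 0 : ℤ) * d 1 := by exact_mod_cast hb
  rcases Nat.lt_or_ge (d 0) 3 with h3 | hA3
  · -- d 0 = 2 : contradiction
    exfalso
    have h02 : d 0 = 2 := by omega
    have hCB : d 2 = d 1 := by
      have := hb; rw [h02] at this; omega
    rw [hE, h02, hCB] at hΔ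
    push_cast at hΔ
    nlinarith
  · rcases Nat.lt_or_ge (d 0) 4 with h4 | hA4
    · -- d 0 = 3
      have h03 : d 0 = 3 := by omega
      rcases Nat.lt_or_ge (d 1) 4 with hb4 | hB4
      · -- d 1 = 3 : enumerate d 2
        have h13 : d 1 = 3 := by omega
        have hC34 : d 2 = 3 ∨ d 2 = 4 := by
          have := hb; rw [h03, h13] at this; omega
        rcases hC34 with hC3 | hC4
        · left
          refine ⟨fun i => ?_, by rw [hE, h03, h13, hC3]; norm_num⟩
          have l1 := hmono (Fin.zero_le i)
          have l2 := hmono (Fin.le_last i)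
          have hl : Fin.last 2 = 2 := rfl
          rw [hl] at l2
          omega
        · right
          rw [hE, h03, h13, hC4]; norm_num
      · -- d 1 ≥ 4
        right
        rw [hE, h03]
        have hB4' : (4:ℤ) ≤ d 1 := by exact_mod_cast hB4
        have hbZ' : 2 * (d 2 : ℤ) ≤ 3 * d 1 := by
          have := hbZ; rw [h03] at this; push_cast at this; linarith
        have h1 : (0:ℤ) ≤ ((d 2:ℤ) - d 1) * (2*(d 1:ℤ) - d 2) := by
          apply mul_nonneg <;> linarith
        have h6 : (16:ℤ) ≤ (d 1:ℤ)^2 := by nlinarith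
        push_cast
        nlinarith [h1, h6]
    · -- d 0 ≥ 4
      right
      rw [hE]
      have hA4' : (4:ℤ) ≤ d 0 := by exact_mod_cast hA4
      have h1 : (0:ℤ) ≤ ((d 2:ℤ) - d 1) * ((d 0:ℤ)*(d 1) - d 2 - d 1) := by
        apply mul_nonneg
        · linarith
        · nlinarith
      have hB2 : (d 0:ℤ)^2 ≤ (d 1:ℤ)^2 := by nlinarith
      have h4 : ((d 0:ℤ)-2)*(d 0:ℤ)^2 ≤ ((d 0:ℤ)-2)*(d 1:ℤ)^2 :=
        mul_le_mul_of_nonneg_left hB2 (by linarith)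
      have h5 : (d 0:ℤ)^2 ≤ ((d 0:ℤ)-3)*(d 0:ℤ)^2 := by nlinarith [sq_nonneg (d 0:ℤ)]
      have h6 : (16:ℤ) ≤ (d 0:ℤ)^2 := by nlinarith
      have hstep : (d 0:ℤ)*(d 1)*(d 2) - (d 2:ℤ)^2 ≥ (d 0:ℤ)*(d 1:ℤ)^2 - (d 1:ℤ)^2 := by
        nlinarith [h1]
      linarith [hstep, h4, h5, h6]


lemma case4 (d : Fin 4 → ℕ) (hd : ∀ i, 2 ≤ d i) (hmono : Monotone d)
    (hbound : 2 * d (Fin.last 3) ≤ ∏ i : Fin 3, d (Fin.castSucc i)) (hΔ : 0 < Dfun d) :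
    ((∀ i, d i = 2) ∧ Dfun d = 3) ∨ 3 < Dfun d := by
  have hE : Dfun d = (d 0 : ℤ) * d 1 * d 2 * d 3 + 3
      - (d 0:ℤ)^2 - (d 1:ℤ)^2 - (d 2:ℤ)^2 - (d 3:ℤ)^2 := by
    simp [Dfun, Fin.prod_univ_four, Fin.sum_univ_four]; ring
  have hb : 2 * d 3 ≤ d 0 * d 1 * d 2 := by simpa [Fin.prod_univ_three] using hbound
  have h01 : d 0 ≤ d 1 := hmono (by decide)
  have h12 : d 1 ≤ d 2 := hmono (by decide)
  have h23 : d 2 ≤ d 3 := hmono (by decide)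
  have h2 : 2 ≤ d 0 := hd 0
  have hAB : (d 0 : ℤ) ≤ d 1 := by exact_mod_cast h01
  have hBC : (d 1 : ℤ) ≤ d 2 := by exact_mod_cast h12
  have hCD : (d 2 : ℤ) ≤ d 3 := by exact_mod_cast h23
  have hA2 : (2:ℤ) ≤ d 0 := by exact_mod_cast h2
  have hbZ : 2 * (d 3 : ℤ) ≤ (d 0 : ℤ) * d 1 * d 2 := by exact_mod_cast hb
  have hf : (0:ℤ) ≤ ((d 3:ℤ) - d 2) * ((d 0:ℤ)*(d 1)*(d 2) - d 3 - d 2) := by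
    apply mul_nonneg
    · linarith
    · linarith
  -- hf gives: A*B*C*D - D^2 ≥ A*B*C^2 - C^2
  have hstep : (d 0:ℤ)*(d 1)*(d 2)*(d 3) - (d 3:ℤ)^2 ≥
      (d 0:ℤ)*(d 1)*(d 2:ℤ)^2 - (d 2:ℤ)^2 := by nlinarith [hf]
  rcases Nat.lt_or_ge (d 1) 3 with hb1 | hB3
  · -- d 1 = 2, so d 0 = 2
    have h02 : d 0 = 2 := by omega
    have h12' : d 1 = 2 := by omega
    rcases Nat.lt_or_ge (d 2) 3 with hc2 | hC3
    · -- d 2 = 2 : enumerate d 3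
      have h22 : d 2 = 2 := by omega
      have hD : d 3 = 2 ∨ d 3 = 3 ∨ d 3 = 4 := by
        have := hb; rw [h02, h12', h22] at this
        have := hd 3; omega
      rcases hD with h | h | h
      · left
        refine ⟨fun i => ?_, by rw [hE, h02, h12', h22, h]; norm_num⟩
        have l2 := hmono (Fin.le_last i)
        have hl : Fin.last 3 = 3 := rfl
        rw [hl] at l2
        have := hd i; omega
      · right; rw [hE, h02, h12', h22, h]; norm_num
      · right; rw [hE, h02, h12', h22, h]; norm_num
    · -- d 2 ≥ 3 : Δ ≥ 2c² - 5 ≥ 13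
      right
      rw [hE, h02, h12']
      have hC3' : (3:ℤ) ≤ d 2 := by exact_mod_cast hC3
      have hstep' : 2*2*(d 2:ℤ)*(d 3) - (d 3:ℤ)^2 ≥ 2*2*(d 2:ℤ)^2 - (d 2:ℤ)^2 := by
        rw [h02, h12'] at hstep; push_cast at hstep; linarith
      push_cast
      nlinarith [hstep', hC3']
  · -- d 1 ≥ 3
    right
    rw [hE]
    have hB3' : (3:ℤ) ≤ d 1 := by exact_mod_cast hB3
    have hC3' : (3:ℤ) ≤ d 2 := by linarith
    -- A*B*C^2 ≥ 6*C*C ≥ 6 C^2 ; A^2 ≤ C^2, B^2 ≤ C^2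
    have hab : (6:ℤ) ≤ (d 0:ℤ)*(d 1) := by nlinarith
    have hABC : 6*(d 2:ℤ)^2 ≤ (d 0:ℤ)*(d 1)*(d 2:ℤ)^2 := by
      have := mul_le_mul_of_nonneg_right hab (sq_nonneg (d 2:ℤ))
      linarith [this]
    have hA2c : (d 0:ℤ)^2 ≤ (d 2:ℤ)^2 := by nlinarith
    have hB2c : (d 1:ℤ)^2 ≤ (d 2:ℤ)^2 := by nlinarith
    have hc9 : (9:ℤ) ≤ (d 2:ℤ)^2 := by nlinarith
    linarith [hstep, hABC, hA2c, hB2c, hc9]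


lemma two_pow_aux (k : ℕ) : k + 6 ≤ 2 ^ (k + 3) := by
  induction k with
  | zero => norm_num
  | succ n ih => rw [pow_succ]; omega

lemma caseBig (k : ℕ) (d : Fin (k + 5) → ℕ) (hd : ∀ i, 2 ≤ d i) (hmono : Monotone d)
    (hbound : 2 * d (Fin.last (k + 4)) ≤ ∏ i : Fin (k + 4), d (Fin.castSucc i)) :
    3 < Dfun d := by
  set Q' : ℤ := ∏ i : Fin (k + 3), (d (Fin.castSucc (Fin.castSucc i)) : ℤ) with hQ'
  set S' : ℤ := ∑ i : Fin (k + 3), ((d (Fin.castSucc (Fin.castSucc i)) : ℤ) ^ 2 - 1) with hS'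
  set b : ℤ := (d (Fin.castSucc (Fin.last (k + 3))) : ℤ) with hb
  set D : ℤ := (d (Fin.last (k + 4)) : ℤ) with hD
  have hE : Dfun d = Q' * b * D - 1 - (S' + (b ^ 2 - 1) + (D ^ 2 - 1)) := by
    rw [Dfun, Fin.prod_univ_castSucc, Fin.prod_univ_castSucc,
      Fin.sum_univ_castSucc, Fin.sum_univ_castSucc]
  have hQb : 2 * D ≤ Q' * b := by
    have h1 : 2 * D ≤ ∏ i : Fin (k + 4), (d (Fin.castSucc i) : ℤ) := by
      rw [hD]
      exact_mod_cast hbound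
    rwa [Fin.prod_univ_castSucc] at h1
  have hbD : b ≤ D := by
    rw [hb, hD]
    exact_mod_cast hmono (Fin.le_last _)
  have hb2 : (2:ℤ) ≤ b := by rw [hb]; exact_mod_cast hd _
  have hb4 : (4:ℤ) ≤ b ^ 2 := by nlinarith
  have hS : S' ≤ ((k:ℤ) + 3) * (b ^ 2 - 1) := by
    rw [hS']
    calc ∑ i : Fin (k + 3), ((d (Fin.castSucc (Fin.castSucc i)) : ℤ) ^ 2 - 1)
        ≤ ∑ _i : Fin (k + 3), (b ^ 2 - 1) := by
          apply Finset.sum_le_sum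
          intro i _
          have hle : d (Fin.castSucc (Fin.castSucc i)) ≤ d (Fin.castSucc (Fin.last (k + 3))) :=
            hmono (Fin.castSucc_le_castSucc_iff.2 (Fin.le_last _))
          have hleZ : ((d (Fin.castSucc (Fin.castSucc i)) : ℤ)) ≤ b := by
            rw [hb]; exact_mod_cast hle
          have h0 : (0:ℤ) ≤ (d (Fin.castSucc (Fin.castSucc i)) : ℤ) := by positivity
          nlinarith
      _ = ((k:ℤ) + 3) * (b ^ 2 - 1) := by
          simp [Finset.sum_const]; ring
  have hQ : ((k:ℤ) + 6) ≤ Q' := by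
    have h1 : (2:ℕ) ^ (k + 3) ≤ ∏ i : Fin (k + 3), d (Fin.castSucc (Fin.castSucc i)) := by
      calc (2:ℕ) ^ (k + 3) = ∏ _i : Fin (k + 3), 2 := by simp
        _ ≤ _ := Finset.prod_le_prod' fun i _ => hd _
    have h2 := two_pow_aux k
    have h3 : ((k:ℕ) + 6 : ℕ) ≤ ∏ i : Fin (k + 3), d (Fin.castSucc (Fin.castSucc i)) :=
      le_trans h2 h1
    rw [hQ']
    exact_mod_cast h3
  have hQb2 : ((k:ℤ) + 6) * b ^ 2 ≤ Q' * b ^ 2 :=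
    mul_le_mul_of_nonneg_right hQ (sq_nonneg b)
  have hf : (0:ℤ) ≤ (D - b) * (Q' * b - D - b) := by
    apply mul_nonneg
    · linarith
    · linarith
  have hstep : Q' * b * D - D ^ 2 ≥ Q' * b * b - b ^ 2 := by nlinarith [hf]
  rw [hE]
  linarith [hstep, hS, hQb2, hb4]

/-- for sorted dimensions ≥ 2 with 2·d_n ≤ ∏_{i<n} d_i and
Δ > 0, either the dimensions are (3,3,3) with Δ = 2, or (2,2,2,2) with Δ = 3,
or Δ > 3 (and exactly one of these holds, since the Δ-values are distinct). -/
theorem Delta_gap (m : ℕ) (hm : 2 ≤ m) (d : Fin (m + 1) → ℕ)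
    (hd : ∀ i, 2 ≤ d i) (hmono : Monotone d)
    (hbound : 2 * d (Fin.last m) ≤ ∏ i : Fin m, d (Fin.castSucc i))
    (hΔ : 0 < Dfun d) :
    (m + 1 = 3 ∧ (∀ i, d i = 3) ∧ Dfun d = 2) ∨
    (m + 1 = 4 ∧ (∀ i, d i = 2) ∧ Dfun d = 3) ∨
    3 < Dfun d := by
  obtain ⟨k, rfl⟩ : ∃ k, m = k + 2 := ⟨m - 2, by omega⟩
  rcases k with _ | _ | k
  · rcases case3 d hd hmono hbound hΔ with ⟨h1, h2⟩ | h
    · exact Or.inl ⟨by norm_num, h1, h2⟩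
    · exact Or.inr (Or.inr h)
  · rcases case4 d hd hmono hbound hΔ with ⟨h1, h2⟩ | h
    · exact Or.inr (Or.inl ⟨by norm_num, h1, h2⟩)
    · exact Or.inr (Or.inr h)
  · exact Or.inr (Or.inr (caseBig k d hd hmono hbound))
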